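/- Suppose gcd(a, b² - c²m) = 1. Let A = (a-1)(b-1+cm) - 1. Then for every k ∈ ℕ, setting B = (a-1)(b+c) + ak, the system ax + bz + cmw = A, ay + cz + bw = B has no solution with x, y, z, w ∈ ℕ. Hence no element of ℤ[√m] with rational part (a-1)(b-1+cm) - 1 lies in Frob(a, b+c√m). -/

import Mathlib

/-- `x` lies in `ℤ[√m] ⊆ ℝ`. -/
def inZsqrt (m : ℤ) (x : ℝ) : Prop := ∃ p q : ℤ, x = p + q * Real.sqrt m

/-- `x` lies in `ℕ[√m] ⊆ ℝ`. -/
def inNsqrt (m : ℤ) (x : ℝ) : Prop := ∃ p q : ℕ, x = p + q * Real.sqrt m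

/-- `x ∈ SG(α, β)`, the semigroup of `ℕ[√m]`-combinations of `α` and `β`. -/
def inSG (m : ℤ) (α β x : ℝ) : Prop :=
  ∃ l₁ l₂ : ℝ, inNsqrt m l₁ ∧ inNsqrt m l₂ ∧ x = l₁ * α + l₂ * β

/-- `w ∈ Frob(α, β)`: `w ∈ ℤ[√m]` and `w + ℕ[√m] ⊆ SG(α, β)`. -/
def inFrob (m : ℤ) (α β w : ℝ) : Prop :=
  inZsqrt m w ∧ ∀ n : ℝ, inNsqrt m n → inSG m α β (w + n)

private lemma coeff_eq {m : ℤ} (hirr : Irrational (Real.sqrt m))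
    {p q p' q' : ℤ} (h : (p : ℝ) + q * Real.sqrt m = p' + q' * Real.sqrt m) :
    p = p' ∧ q = q' := by
  have hq : q = q' := by
    by_contra hne
    have hne' : ((q' : ℝ) - q) ≠ 0 := by
      intro h0
      apply hne
      exact_mod_cast sub_eq_zero.mp h0 |>.symm
    have : Real.sqrt m = ((p - p' : ℤ) : ℝ) / ((q' - q : ℤ) : ℝ) := by
      push_cast
      field_simp
      linarith [h]
    exact (irrational_iff_ne_rational _).mp hirr _ _ (by omega) this
  refine ⟨?_, hq⟩
  subst hq
  have : (p : ℝ) = p' := by linarith [h]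
  exact_mod_cast this

theorem stmt_8 (m a b c : ℤ) (hm : 0 < m) (hsq : ¬ IsSquare m)
    (ha : 0 < a) (hb : 0 < b) (hc : 0 < c)
    (hgcd : Int.gcd a (b ^ 2 - c ^ 2 * m) = 1) :
    (∀ k : ℕ,
      ¬ ∃ x y z w : ℕ,
        a * x + b * z + c * m * w = (a - 1) * (b - 1 + c * m) - 1 ∧
        a * y + c * z + b * w = (a - 1) * (b + c) + a * k) ∧
    ∀ β : ℤ,
      ¬ inFrob m (a : ℝ) ((b : ℝ) + c * Real.sqrt m)
          (((a - 1) * (b - 1 + c * m) - 1 : ℤ) + (β : ℝ) * Real.sqrt m) := by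
  have hcop : IsCoprime (a : ℤ) (b ^ 2 - c ^ 2 * m) := Int.isCoprime_iff_gcd_eq_one.mpr hgcd
  have part1 : ∀ k : ℕ,
      ¬ ∃ x y z w : ℕ,
        (a : ℤ) * x + b * z + c * m * w = (a - 1) * (b - 1 + c * m) - 1 ∧
        (a : ℤ) * y + c * z + b * w = (a - 1) * (b + c) + a * k := by
    rintro k ⟨x, y, z, w, h1, h2⟩
    set d : ℤ := b ^ 2 - c ^ 2 * m with hd
    have hz : (a : ℤ) ∣ d * ((z : ℤ) + 1) := by
      refine ⟨d - b - c * m * k - b * x + c * m * y, ?_⟩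
      linear_combination b * h1 - c * m * h2
    have hw : (a : ℤ) ∣ d * ((w : ℤ) + 1) := by
      refine ⟨d + c + b * k + c * x - b * y, ?_⟩
      linear_combination (-c) * h1 + b * h2
    have hz' : (a : ℤ) ∣ (z : ℤ) + 1 := hcop.dvd_of_dvd_mul_left hz
    have hw' : (a : ℤ) ∣ (w : ℤ) + 1 := hcop.dvd_of_dvd_mul_left hw
    have hz2 : (a : ℤ) ≤ (z : ℤ) + 1 := Int.le_of_dvd (by positivity) hz'
    have hw2 : (a : ℤ) ≤ (w : ℤ) + 1 := Int.le_of_dvd (by positivity) hw'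
    have p1 : (0 : ℤ) ≤ b * ((z : ℤ) - (a - 1)) := mul_nonneg hb.le (by linarith)
    have p2 : (0 : ℤ) ≤ c * m * ((w : ℤ) - (a - 1)) :=
      mul_nonneg (mul_nonneg hc.le hm.le) (by linarith)
    have p3 : (0 : ℤ) ≤ a * x := mul_nonneg ha.le (Int.natCast_nonneg x)
    nlinarith [h1, p1, p2, p3, ha, hb, hc, hm]
  refine ⟨part1, ?_⟩
  intro β ⟨_, hAll⟩
  have hirr : Irrational (Real.sqrt m) :=
    (irrational_sqrt_intCast_iff_of_nonneg hm.le).mpr hsq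
  -- choose q : ℕ with β + q = (a-1)(b+c) + a * β.toNat
  set k : ℕ := β.natAbs with hk
  have hq0 : (0 : ℤ) ≤ (a - 1) * (b + c) + a * k - β := by
    have h1 : (0 : ℤ) ≤ (a - 1) * (b + c) := mul_nonneg (by linarith) (by linarith)
    have h2 : (β : ℤ) ≤ a * k := by
      calc (β : ℤ) ≤ (k : ℤ) := Int.le_natAbs
      _ ≤ a * k := by nlinarith [Int.natCast_nonneg k]
    linarith
  set q : ℕ := ((a - 1) * (b + c) + a * k - β).toNat with hqdef
  have hqval : (q : ℤ) = (a - 1) * (b + c) + a * k - β := Int.toNat_of_nonneg hq0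
  have hn : inNsqrt m ((q : ℝ) * Real.sqrt m) := ⟨0, q, by push_cast; ring⟩
  obtain ⟨l₁, l₂, ⟨x, y, rfl⟩, ⟨z, w, rfl⟩, heq⟩ := hAll _ hn
  have hmsq : Real.sqrt m * Real.sqrt m = (m : ℝ) :=
    Real.mul_self_sqrt (by exact_mod_cast hm.le)
  have heq2 : (((a - 1) * (b - 1 + c * m) - 1 : ℤ) : ℝ)
      + ((β + q : ℤ) : ℝ) * Real.sqrt m
      = ((a * x + b * z + c * m * w : ℤ) : ℝ)
        + ((a * y + c * z + b * w : ℤ) : ℝ) * Real.sqrt m := by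
    push_cast
    push_cast at heq
    linear_combination heq + (w : ℝ) * (c : ℝ) * hmsq
  obtain ⟨e1, e2⟩ := coeff_eq hirr heq2
  exact part1 k ⟨x, y, z, w, by linarith [e1], by linarith [e2, hqval]⟩
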